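/- Let γ be a confidence parameter with 0 < γ < 1 and let X₀ → Y₀, X₁ → Y₁, …, X_k → Y_k be partial implications over [n] with k ≥ 1. Then the following are equivalent: (1) X₁ → Y₁, …, X_k → Y_k ⊨_γ X₀ → Y₀; (2) there exists L ⊆ [k] such that {X_i → Y_i : i ∈ L} ⊨_γ X₀ → Y₀ holds properly; (3) either Y₀ ⊆ X₀, or there exists a non-empty L ⊆ [k] such that (a) {X_i → Y_i : i ∈ L} enforces homogeneity, (b) ⋃_{i∈L} X_i ⊆ X₀ ⊆ ⋃_{i∈L} X_iY_i, (c) Y₀ ⊆ X₀ ∪ ⋂_{i∈L} Y_i, and (d) γ ≥ γ*({X_i → Y_i : i ∈ L}, X₀). -/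

import Mathlib

open Finset

/-- Number of transactions in the dataset `D` that cover `X`, counted with multiplicity. -/
def cntD {n : ℕ} (D : Multiset (Finset (Fin n))) (X : Finset (Fin n)) : ℕ :=
  (D.filter (fun Z => X ⊆ Z)).card

/-- `D ⊨_γ X → Y` : either no transaction covers `X`, or the confidence of `X → Y` is ≥ γ. -/
def satPI {n : ℕ} (γ : ℝ) (D : Multiset (Finset (Fin n))) (X Y : Finset (Fin n)) : Prop :=
  cntD D X = 0 ∨ γ * (cntD D X : ℝ) ≤ (cntD D (X ∪ Y) : ℝ)

/-- Entailment at confidence threshold γ from the premises indexed by `L`. -/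
def entailsFrom {n k : ℕ} (γ : ℝ) (P : Fin k → Finset (Fin n) × Finset (Fin n))
    (L : Finset (Fin k)) (X₀ Y₀ : Finset (Fin n)) : Prop :=
  ∀ D : Multiset (Finset (Fin n)),
    (∀ i ∈ L, satPI γ D (P i).1 (P i).2) → satPI γ D X₀ Y₀

/-- Proper entailment from the premises indexed by `L`: the entailment holds,
and it fails from every proper subset of the premises. -/
def properFrom {n k : ℕ} (γ : ℝ) (P : Fin k → Finset (Fin n) × Finset (Fin n))
    (L : Finset (Fin k)) (X₀ Y₀ : Finset (Fin n)) : Prop :=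
  entailsFrom γ P L X₀ Y₀ ∧ ∀ L' ⊂ L, ¬ entailsFrom γ P L' X₀ Y₀

/-- The weight `w_Z(X → Y)`: `1-γ` if `Z` witnesses, `-γ` if `Z` violates, `0` otherwise. -/
noncomputable def wt {n : ℕ} (γ : ℝ) (Z X Y : Finset (Fin n)) : ℝ :=
  if X ∪ Y ⊆ Z then 1 - γ else if X ⊆ Z then -γ else 0

/-- The premises indexed by `L` enforce homogeneity. -/
def homogFrom {n k : ℕ} (P : Fin k → Finset (Fin n) × Finset (Fin n))
    (L : Finset (Fin k)) : Prop :=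
  ∀ Z : Finset (Fin n),
    (∀ i ∈ L, ¬ (P i).1 ⊆ Z ∨ (P i).1 ∪ (P i).2 ⊆ Z) →
    ((∀ i ∈ L, ¬ (P i).1 ⊆ Z) ∨ (∀ i ∈ L, (P i).1 ∪ (P i).2 ⊆ Z))

/-- The critical threshold `γ*({Xᵢ → Yᵢ : i ∈ L}, X)`. -/
noncomputable def gammaStar {n k : ℕ} (P : Fin k → Finset (Fin n) × Finset (Fin n))
    (L : Finset (Fin k)) (X : Finset (Fin n)) : ℝ :=
  sInf { r : ℝ | ∃ lam : Fin k → ℝ, (∀ i ∈ L, 0 ≤ lam i) ∧ (∑ i ∈ L, lam i) = 1 ∧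
    r = (Finset.univ.filter (fun Z : Finset (Fin n) => ¬ X ⊆ Z)).fold max 0
          (fun Z => (∑ i ∈ L.filter (fun i => (P i).1 ∪ (P i).2 ⊆ Z), lam i) /
                    (∑ i ∈ L.filter (fun i => (P i).1 ⊆ Z), lam i)) }


open Finset

section Farkas

variable {η : Type*} [Fintype η]

def dotp (u v : η → ℝ) : ℝ := ∑ x, u x * v x

lemma dotp_sub_left (u w y : η → ℝ) : dotp (u - w) y = dotp u y - dotp w y := by
  simp [dotp, sub_mul, Finset.sum_sub_distrib]

lemma dotp_smul_left (c : ℝ) (u y : η → ℝ) : dotp (c • u) y = c * dotp u y := by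
  simp [dotp, Finset.mul_sum, mul_assoc]

lemma dotp_sub_right (u w y : η → ℝ) : dotp y (u - w) = dotp y u - dotp y w := by
  simp [dotp, mul_sub, Finset.sum_sub_distrib]

lemma dotp_smul_right (c : ℝ) (u y : η → ℝ) : dotp y (c • u) = c * dotp y u := by
  simp [dotp, Finset.mul_sum, mul_comm, mul_left_comm]

theorem farkas_aux {τ : Type*} [DecidableEq τ] (s : Finset τ) :
    ∀ (v : τ → η → ℝ) (b : η → ℝ),
    (∃ c : τ → ℝ, (∀ i ∈ s, 0 ≤ c i) ∧ b = ∑ i ∈ s, c i • v i) ∨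
    (∃ y : η → ℝ, (∀ i ∈ s, 0 ≤ dotp (v i) y) ∧ dotp b y < 0) := by
  induction s using Finset.cons_induction with
  | empty =>
    intro v b
    by_cases hb : b = 0
    · exact Or.inl ⟨0, by simp, by simp [hb]⟩
    · refine Or.inr ⟨-b, by simp, ?_⟩
      have h1 : dotp b (-b) = -∑ x, (b x)^2 := by
        simp [dotp, sq]
      rw [h1, neg_lt, neg_zero]
      obtain ⟨x, hx⟩ := Function.ne_iff.mp hb
      exact Finset.sum_pos' (fun i _ => sq_nonneg _)
        ⟨x, Finset.mem_univ x,
          lt_of_le_of_ne (sq_nonneg _) (Ne.symm (pow_ne_zero 2 hx))⟩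
  | cons a s ha ih =>
    intro v b
    rcases ih v b with ⟨c, hc0, hb⟩ | ⟨y, hy, hby⟩
    · refine Or.inl ⟨Function.update c a 0, ?_, ?_⟩
      · intro i hi
        rcases Finset.mem_cons.mp hi with rfl | hi2
        · simp
        · have hne : i ≠ a := by rintro rfl; exact ha hi2
          rw [Function.update_of_ne hne]; exact hc0 i hi2
      · rw [Finset.sum_cons, Function.update_self, zero_smul, zero_add, hb]
        refine Finset.sum_congr rfl (fun i hi => ?_)
        have hne : i ≠ a := by rintro rfl; exact ha hi
        rw [Function.update_of_ne hne]
    · by_cases hva : 0 ≤ dotp (v a) y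
      · refine Or.inr ⟨y, ?_, hby⟩
        intro i hi
        rcases Finset.mem_cons.mp hi with rfl | hi2
        · exact hva
        · exact hy i hi2
      · push_neg at hva
        have hdne : dotp (v a) y ≠ 0 := ne_of_lt hva
        set d := dotp (v a) y with hd
        set proj : (η → ℝ) → (η → ℝ) := fun u => u - (dotp u y / d) • v a with hproj
        rcases ih (fun i => proj (v i)) (proj b) with ⟨c, hc0, hpb⟩ | ⟨y', hy', hby'⟩
        · -- reconstruct cone membership
          set S : ℝ := ∑ i ∈ s, c i * dotp (v i) y with hS
          have hS0 : 0 ≤ S :=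
            Finset.sum_nonneg (fun i hi => mul_nonneg (hc0 i hi) (hy i hi))
          set α : ℝ := (dotp b y - S) / d with hα
          have hα0 : 0 ≤ α := by
            have hnum : dotp b y - S < 0 := by linarith
            exact le_of_lt (div_pos_of_neg_of_neg hnum hva)
          simp only [hproj] at hpb
          have hexp : ∑ i ∈ s, c i • (v i - (dotp (v i) y / d) • v a)
              = (∑ i ∈ s, c i • v i) - (S / d) • v a := by
            rw [hS, Finset.sum_div, Finset.sum_smul, ← Finset.sum_sub_distrib]
            exact Finset.sum_congr rfl
              (fun i hi => by rw [smul_sub, smul_smul, mul_div_assoc])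
          have hbeq : b = α • v a + ∑ i ∈ s, c i • v i := by
            have h3 : b = (∑ i ∈ s, c i • v i) - (S / d) • v a + (dotp b y / d) • v a := by
              rw [← hexp, ← hpb]; abel
            rw [h3, hα, sub_div, sub_smul]; abel
          refine Or.inl ⟨Function.update c a α, ?_, ?_⟩
          · intro i hi
            rcases Finset.mem_cons.mp hi with rfl | hi2
            · simpa using hα0
            · have hne : i ≠ a := by rintro rfl; exact ha hi2
              rw [Function.update_of_ne hne]; exact hc0 i hi2
          · rw [Finset.sum_cons, Function.update_self, hbeq]
            congr 1
            refine Finset.sum_congr rfl (fun i hi => ?_)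
            have hne : i ≠ a := by rintro rfl; exact ha hi
            rw [Function.update_of_ne hne]
        · -- adjust the separating functional
          set y'' : η → ℝ := y' - (dotp (v a) y' / d) • y with hy2
          have hkey : ∀ u : η → ℝ, dotp u y'' = dotp (proj u) y' := by
            intro u
            have h1 : dotp u y'' = dotp u y' - dotp (v a) y' / d * dotp u y := by
              rw [hy2, dotp_sub_right, dotp_smul_right]
            have h2 : dotp (proj u) y' = dotp u y' - dotp u y / d * dotp (v a) y' := by
              simp only [hproj]
              rw [dotp_sub_left, dotp_smul_left]
            rw [h1, h2]; ring
          refine Or.inr ⟨y'', ?_, ?_⟩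
          · intro i hi
            rcases Finset.mem_cons.mp hi with rfl | hi2
            · rw [hkey (v i)]
              simp only [hproj]
              rw [dotp_sub_left, dotp_smul_left, ← hd, div_self hdne, one_mul, sub_self]
            · rw [hkey (v i)]
              exact hy' i hi2
          · rw [hkey b]; exact hby'

theorem farkas_lp {k : ℕ} {ζ : Type*} [Fintype ζ] [DecidableEq ζ]
    (A : Fin k → ζ → ℝ) (b : ζ → ℝ) :
    (∃ μ : Fin k → ℝ, (∀ i, 0 ≤ μ i) ∧ ∀ Z, ∑ i, μ i * A i Z ≤ b Z) ∨
    (∃ m : ζ → ℝ, (∀ Z, 0 ≤ m Z) ∧ (∀ i, 0 ≤ ∑ Z, m Z * A i Z) ∧ ∑ Z, m Z * b Z < 0) := by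
  classical
  set v : (Fin k ⊕ ζ) → ζ → ℝ :=
    Sum.elim (fun i => A i) (fun Z₀ Z => if Z₀ = Z then 1 else 0) with hv
  rcases farkas_aux (Finset.univ : Finset (Fin k ⊕ ζ)) v b with ⟨c, hc0, hb⟩ | ⟨y, hy, hby⟩
  · refine Or.inl ⟨fun i => c (Sum.inl i), fun i => hc0 _ (Finset.mem_univ _), ?_⟩
    intro Z
    have h0 := congrFun hb Z
    rw [Finset.sum_apply, Fintype.sum_sum_type] at h0
    simp only [hv, Sum.elim_inl, Sum.elim_inr, Pi.smul_apply, smul_eq_mul] at h0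
    rw [h0]
    have h1 : ∑ Z₀ : ζ, c (Sum.inr Z₀) * (if Z₀ = Z then (1:ℝ) else 0) = c (Sum.inr Z) := by
      simp only [mul_ite, mul_one, mul_zero]
      rw [Finset.sum_ite_eq' Finset.univ Z (fun Z₀ => c (Sum.inr Z₀))]
      simp
    rw [h1]
    have : 0 ≤ c (Sum.inr Z) := hc0 _ (Finset.mem_univ _)
    linarith
  · refine Or.inr ⟨y, ?_, ?_, ?_⟩
    · intro Z
      have := hy (Sum.inr Z) (Finset.mem_univ _)
      simpa [dotp, hv, ite_mul] using this
    · intro i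
      have := hy (Sum.inl i) (Finset.mem_univ _)
      simpa [dotp, hv, mul_comm] using this
    · simpa [dotp, mul_comm] using hby

end Farkas

section Basics

variable {n k : ℕ}

lemma cntD_mono (D : Multiset (Finset (Fin n))) {X X' : Finset (Fin n)} (h : X ⊆ X') :
    cntD D X' ≤ cntD D X := by
  unfold cntD
  exact Multiset.card_le_card (Multiset.monotone_filter_right D
    (fun Z hZ => h.trans hZ))

lemma satPI_iff {γ : ℝ} (D : Multiset (Finset (Fin n))) (X Y : Finset (Fin n)) :
    satPI γ D X Y ↔ γ * (cntD D X : ℝ) ≤ (cntD D (X ∪ Y) : ℝ) := by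
  constructor
  · rintro (h0 | h)
    · have h1 : cntD D (X ∪ Y) = 0 :=
        Nat.le_zero.mp (h0 ▸ cntD_mono D subset_union_left)
      simp [h0, h1]
    · exact h
  · exact fun h => Or.inr h

lemma cnt_real (D : Multiset (Finset (Fin n))) (X : Finset (Fin n)) :
    ((cntD D X : ℝ)) = (D.map (fun Z => if X ⊆ Z then (1:ℝ) else 0)).sum := by
  unfold cntD
  induction D using Multiset.induction_on with
  | empty => simp
  | cons a s ih =>
    rw [Multiset.filter_cons, Multiset.map_cons, Multiset.sum_cons, ← ih]
    by_cases h : X ⊆ a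
    · simp [h, add_comm]
    · simp [h]

lemma wt_eq (γ : ℝ) (Z X Y : Finset (Fin n)) :
    wt γ Z X Y = (if X ∪ Y ⊆ Z then (1:ℝ) else 0) - γ * (if X ⊆ Z then 1 else 0) := by
  unfold wt
  by_cases h1 : X ∪ Y ⊆ Z
  · have h2 : X ⊆ Z := subset_union_left.trans h1
    simp [h1, h2]
  · by_cases h2 : X ⊆ Z <;> simp [h1, h2]

lemma wt_le (γ : ℝ) (hγ : 0 < γ) (hγ1 : γ < 1) (Z X Y : Finset (Fin n)) :
    wt γ Z X Y ≤ 1 - γ := by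
  unfold wt; split_ifs <;> linarith

lemma wt_ge (γ : ℝ) (hγ : 0 < γ) (hγ1 : γ < 1) (Z X Y : Finset (Fin n)) :
    -γ ≤ wt γ Z X Y := by
  unfold wt; split_ifs <;> linarith

lemma wt_abs (γ : ℝ) (hγ : 0 < γ) (hγ1 : γ < 1) (Z X Y : Finset (Fin n)) :
    |wt γ Z X Y| ≤ 1 := by
  unfold wt; split_ifs <;> rw [abs_le] <;> constructor <;> linarith

lemma wt_univ (γ : ℝ) (X Y : Finset (Fin n)) : wt γ Finset.univ X Y = 1 - γ := by
  unfold wt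
  simp [Finset.subset_univ]

lemma msum_sub (D : Multiset (Finset (Fin n))) (f g : Finset (Fin n) → ℝ) :
    (D.map (fun Z => f Z - g Z)).sum = (D.map f).sum - (D.map g).sum := by
  induction D using Multiset.induction_on with
  | empty => simp
  | cons a s ih =>
    simp only [Multiset.map_cons, Multiset.sum_cons, ih]; ring

lemma msum_cmul (D : Multiset (Finset (Fin n))) (c : ℝ) (f : Finset (Fin n) → ℝ) :
    (D.map (fun Z => c * f Z)).sum = c * (D.map f).sum := by
  induction D using Multiset.induction_on with
  | empty => simp
  | cons a s ih =>
    simp only [Multiset.map_cons, Multiset.sum_cons, ih]; ring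

lemma map_wt_sum (γ : ℝ) (D : Multiset (Finset (Fin n))) (X Y : Finset (Fin n)) :
    (D.map (fun Z => wt γ Z X Y)).sum = (cntD D (X ∪ Y) : ℝ) - γ * (cntD D X : ℝ) := by
  rw [cnt_real, cnt_real]
  have h : (fun Z => wt γ Z X Y)
      = fun Z => (if X ∪ Y ⊆ Z then (1:ℝ) else 0) - γ * (if X ⊆ Z then 1 else 0) :=
    funext (fun Z => wt_eq γ Z X Y)
  rw [h, msum_sub, msum_cmul]

lemma map_sum_swap {α : Type*} (D : Multiset (Finset (Fin n))) (L : Finset α)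
    (g : α → Finset (Fin n) → ℝ) :
    (D.map (fun Z => ∑ i ∈ L, g i Z)).sum = ∑ i ∈ L, (D.map (g i)).sum := by
  induction D using Multiset.induction_on with
  | empty => simp
  | cons a s ih =>
    simp only [Multiset.map_cons, Multiset.sum_cons, ih, Finset.sum_add_distrib]

lemma map_sum_le (D : Multiset (Finset (Fin n))) (f g : Finset (Fin n) → ℝ)
    (h : ∀ Z, f Z ≤ g Z) : (D.map f).sum ≤ (D.map g).sum := by
  induction D using Multiset.induction_on with
  | empty => simp
  | cons a s ih =>
    simp only [Multiset.map_cons, Multiset.sum_cons]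
    exact add_le_add (h a) ih

end Basics

section Part1

variable {n k : ℕ} {γ : ℝ} {P : Fin k → Finset (Fin n) × Finset (Fin n)}
  {X₀ Y₀ : Finset (Fin n)}

lemma entails_mono {L L' : Finset (Fin k)} (h : L ⊆ L')
    (he : entailsFrom γ P L X₀ Y₀) : entailsFrom γ P L' X₀ Y₀ :=
  fun D hD => he D (fun i hi => hD i (h hi))

lemma exists_proper_of_entails {L : Finset (Fin k)} (he : entailsFrom γ P L X₀ Y₀) :
    ∃ L', properFrom γ P L' X₀ Y₀ := by
  have key : ∀ m (L : Finset (Fin k)), L.card ≤ m → entailsFrom γ P L X₀ Y₀ →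
      ∃ L', properFrom γ P L' X₀ Y₀ := by
    intro m
    induction m with
    | zero =>
      intro L hL he
      have : L = ∅ := Finset.card_eq_zero.mp (Nat.le_zero.mp hL)
      subst this
      exact ⟨∅, he, fun L' h' => absurd h' (Finset.not_ssubset_empty L')⟩
    | succ m ih =>
      intro L hL he
      by_cases hmin : ∀ L' ⊂ L, ¬ entailsFrom γ P L' X₀ Y₀
      · exact ⟨L, he, hmin⟩
      · push_neg at hmin
        obtain ⟨L', hsub, hent⟩ := hmin
        exact ih L' (by have := Finset.card_lt_card hsub; omega) hent
  exact key L.card L le_rfl he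

end Part1

section Part2a

variable {n k : ℕ} {γ : ℝ} {P : Fin k → Finset (Fin n) × Finset (Fin n)}
  {X₀ Y₀ : Finset (Fin n)}

lemma msum_add (D : Multiset (Finset (Fin n))) (f g : Finset (Fin n) → ℝ) :
    (D.map (fun Z => f Z + g Z)).sum = (D.map f).sum + (D.map g).sum := by
  induction D using Multiset.induction_on with
  | empty => simp
  | cons a s ih =>
    simp only [Multiset.map_cons, Multiset.sum_cons, ih]; ring

lemma msum_const (D : Multiset (Finset (Fin n))) (c : ℝ) :
    (D.map (fun _ => c)).sum = (Multiset.card D : ℝ) * c := by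
  induction D using Multiset.induction_on with
  | empty => simp
  | cons a s ih =>
    simp only [Multiset.map_cons, Multiset.sum_cons, ih, Multiset.card_cons]
    push_cast; ring

lemma sum_wt_split (γ : ℝ) (P : Fin k → Finset (Fin n) × Finset (Fin n))
    (L : Finset (Fin k)) (lam : Fin k → ℝ) (Z : Finset (Fin n)) :
    ∑ i ∈ L, lam i * wt γ Z (P i).1 (P i).2
      = (∑ i ∈ L.filter (fun i => (P i).1 ∪ (P i).2 ⊆ Z), lam i)
        - γ * (∑ i ∈ L.filter (fun i => (P i).1 ⊆ Z), lam i) := by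
  have h : ∀ i ∈ L, lam i * wt γ Z (P i).1 (P i).2
      = (if (P i).1 ∪ (P i).2 ⊆ Z then lam i else 0)
        - γ * (if (P i).1 ⊆ Z then lam i else 0) := by
    intro i _
    rw [wt_eq]
    split_ifs <;> ring
  rw [Finset.sum_congr rfl h, Finset.sum_sub_distrib, ← Finset.mul_sum,
    ← Finset.sum_filter, ← Finset.sum_filter]

lemma entails_of_approx {L : Finset (Fin k)} (hγ0 : 0 < γ)
    (h : ∀ ε : ℝ, 0 < ε → ∃ lam : Fin k → ℝ, (∀ i ∈ L, 0 ≤ lam i) ∧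
      ∀ Z, ∑ i ∈ L, lam i * wt γ Z (P i).1 (P i).2 ≤ wt γ Z X₀ Y₀ + ε) :
    entailsFrom γ P L X₀ Y₀ := by
  intro D hD
  rw [satPI_iff]
  refine le_of_forall_pos_le_add ?_
  intro ε hε
  set c : ℝ := (Multiset.card D : ℝ) with hc
  have hc0 : 0 ≤ c := Nat.cast_nonneg _
  have hεc : 0 < ε / (c + 1) := by positivity
  obtain ⟨lam, hlam0, hlam⟩ := h (ε / (c + 1)) hεc
  have step1 : 0 ≤ ∑ i ∈ L, lam i *
      ((cntD D ((P i).1 ∪ (P i).2) : ℝ) - γ * (cntD D (P i).1 : ℝ)) := by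
    refine Finset.sum_nonneg (fun i hi => mul_nonneg (hlam0 i hi) ?_)
    have := (satPI_iff D (P i).1 (P i).2).mp (hD i hi)
    linarith
  have step2 : ∑ i ∈ L, lam i *
      ((cntD D ((P i).1 ∪ (P i).2) : ℝ) - γ * (cntD D (P i).1 : ℝ))
      = (D.map (fun Z => ∑ i ∈ L, lam i * wt γ Z (P i).1 (P i).2)).sum := by
    rw [map_sum_swap]
    refine Finset.sum_congr rfl (fun i hi => ?_)
    rw [msum_cmul, map_wt_sum]
  have step3 : (D.map (fun Z => ∑ i ∈ L, lam i * wt γ Z (P i).1 (P i).2)).sum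
      ≤ (D.map (fun Z => wt γ Z X₀ Y₀ + ε / (c + 1))).sum :=
    map_sum_le D _ _ hlam
  have step4 : (D.map (fun Z => wt γ Z X₀ Y₀ + ε / (c + 1))).sum
      = ((cntD D (X₀ ∪ Y₀) : ℝ) - γ * (cntD D X₀ : ℝ)) + (ε / (c + 1)) * c := by
    have h1 : (D.map (fun Z => wt γ Z X₀ Y₀ + ε / (c + 1))).sum
        = (D.map (fun Z => wt γ Z X₀ Y₀)).sum + (D.map (fun _ => ε / (c + 1))).sum :=
      msum_add D _ _
    rw [h1, map_wt_sum, msum_const, ← hc]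
    ring
  have hfrac : (ε / (c + 1)) * c ≤ ε := by
    rw [div_mul_eq_mul_div, div_le_iff₀ (by positivity : (0:ℝ) < c + 1)]
    nlinarith
  linarith [step1, step2 ▸ step1, step3, step4]

lemma gammaStar_approx {L : Finset (Fin k)} (hne : L.Nonempty)
    (hgs : gammaStar P L X₀ ≤ γ) {ε : ℝ} (hε : 0 < ε) :
    ∃ lam : Fin k → ℝ, (∀ i ∈ L, 0 ≤ lam i) ∧ (∑ i ∈ L, lam i) = 1 ∧
      ∀ Z : Finset (Fin n), ¬ X₀ ⊆ Z →
        (∑ i ∈ L.filter (fun i => (P i).1 ∪ (P i).2 ⊆ Z), lam i) /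
          (∑ i ∈ L.filter (fun i => (P i).1 ⊆ Z), lam i) < γ + ε := by
  unfold gammaStar at hgs
  have hlt := lt_of_le_of_lt hgs (lt_add_of_pos_right γ hε)
  have hbdd : BddBelow {r : ℝ | ∃ lam : Fin k → ℝ, (∀ i ∈ L, 0 ≤ lam i) ∧
      (∑ i ∈ L, lam i) = 1 ∧
      r = (Finset.univ.filter (fun Z : Finset (Fin n) => ¬ X₀ ⊆ Z)).fold max 0
        (fun Z => (∑ i ∈ L.filter (fun i => (P i).1 ∪ (P i).2 ⊆ Z), lam i) /
          (∑ i ∈ L.filter (fun i => (P i).1 ⊆ Z), lam i))} := by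
    refine ⟨0, fun r hr => ?_⟩
    obtain ⟨lam, _, _, rfl⟩ := hr
    exact (Finset.le_fold_max _).mpr (Or.inl le_rfl)
  have hSne : Set.Nonempty {r : ℝ | ∃ lam : Fin k → ℝ, (∀ i ∈ L, 0 ≤ lam i) ∧
      (∑ i ∈ L, lam i) = 1 ∧
      r = (Finset.univ.filter (fun Z : Finset (Fin n) => ¬ X₀ ⊆ Z)).fold max 0
        (fun Z => (∑ i ∈ L.filter (fun i => (P i).1 ∪ (P i).2 ⊆ Z), lam i) /
          (∑ i ∈ L.filter (fun i => (P i).1 ⊆ Z), lam i))} := by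
    refine ⟨_, ⟨fun _ => (L.card : ℝ)⁻¹, fun i _ => by positivity, ?_, rfl⟩⟩
    rw [Finset.sum_const, nsmul_eq_mul]
    have : (L.card : ℝ) ≠ 0 := Nat.cast_ne_zero.mpr hne.card_pos.ne'
    field_simp
  obtain ⟨r, hrS, hrlt⟩ := (csInf_lt_iff hbdd hSne).mp hlt
  obtain ⟨lam, hlam0, hlam1, rfl⟩ := hrS
  refine ⟨lam, hlam0, hlam1, fun Z hZ => ?_⟩
  refine lt_of_le_of_lt ?_ hrlt
  exact (Finset.le_fold_max _).mpr (Or.inr ⟨Z, Finset.mem_filter.mpr ⟨Finset.mem_univ _, hZ⟩, le_rfl⟩)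

lemma conditions_to_entails (hγ0 : 0 < γ) (hγ1 : γ < 1) {L : Finset (Fin k)}
    (hne : L.Nonempty) (hXs : L.biUnion (fun i => (P i).1) ⊆ X₀)
    (hY : Y₀ ⊆ X₀ ∪ L.inf (fun i => (P i).2)) (hgs : gammaStar P L X₀ ≤ γ) :
    entailsFrom γ P L X₀ Y₀ := by
  apply entails_of_approx hγ0
  intro ε hε
  obtain ⟨lam, hlam0, hlam1, hratio⟩ := gammaStar_approx hne hgs hε
  refine ⟨lam, hlam0, fun Z => ?_⟩
  by_cases hZ : X₀ ⊆ Z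
  · have hXiZ : ∀ i ∈ L, (P i).1 ⊆ Z := fun i hi =>
      ((Finset.subset_biUnion_of_mem (fun i => (P i).1) hi).trans hXs).trans hZ
    by_cases hZY : X₀ ∪ Y₀ ⊆ Z
    · have hb : wt γ Z X₀ Y₀ = 1 - γ := by unfold wt; rw [if_pos hZY]
      have hsum : ∑ i ∈ L, lam i * wt γ Z (P i).1 (P i).2 ≤ 1 - γ := by
        calc ∑ i ∈ L, lam i * wt γ Z (P i).1 (P i).2
            ≤ ∑ i ∈ L, lam i * (1 - γ) :=
              Finset.sum_le_sum (fun i hi =>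
                mul_le_mul_of_nonneg_left (wt_le γ hγ0 hγ1 _ _ _) (hlam0 i hi))
          _ = 1 - γ := by rw [← Finset.sum_mul, hlam1, one_mul]
      rw [hb]; linarith
    · have hnW : ∀ i ∈ L, ¬ ((P i).1 ∪ (P i).2 ⊆ Z) := by
        intro i hi hcon
        apply hZY
        have h2 : (P i).2 ⊆ Z := subset_union_right.trans hcon
        have h1 : L.inf (fun i => (P i).2) ⊆ Z := (Finset.inf_le hi).trans h2
        exact Finset.union_subset hZ (hY.trans (Finset.union_subset hZ h1))
      have hwts : ∀ i ∈ L, wt γ Z (P i).1 (P i).2 = -γ := fun i hi => by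
        unfold wt; rw [if_neg (hnW i hi), if_pos (hXiZ i hi)]
      have hb : wt γ Z X₀ Y₀ = -γ := by unfold wt; rw [if_neg hZY, if_pos hZ]
      rw [hb, Finset.sum_congr rfl (fun i hi => by rw [hwts i hi]),
        ← Finset.sum_mul, hlam1]
      linarith
  · have hb : wt γ Z X₀ Y₀ = 0 := by
      unfold wt
      rw [if_neg (fun hcon => hZ (subset_union_left.trans hcon)), if_neg hZ]
    rw [sum_wt_split, hb]
    have hnum0 : 0 ≤ ∑ i ∈ L.filter (fun i => (P i).1 ∪ (P i).2 ⊆ Z), lam i :=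
      Finset.sum_nonneg (fun i hi => hlam0 i (Finset.mem_filter.mp hi).1)
    have hnd : (∑ i ∈ L.filter (fun i => (P i).1 ∪ (P i).2 ⊆ Z), lam i)
        ≤ ∑ i ∈ L.filter (fun i => (P i).1 ⊆ Z), lam i := by
      refine Finset.sum_le_sum_of_subset_of_nonneg
        (Finset.monotone_filter_right L (fun i _ h => subset_union_left.trans h))
        (fun i hi _ => hlam0 i (Finset.mem_filter.mp hi).1)
    have hden1 : (∑ i ∈ L.filter (fun i => (P i).1 ⊆ Z), lam i) ≤ 1 := by
      rw [← hlam1]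
      exact Finset.sum_le_sum_of_subset_of_nonneg (Finset.filter_subset _ _)
        (fun i hi _ => hlam0 i hi)
    have hden0 : 0 ≤ ∑ i ∈ L.filter (fun i => (P i).1 ⊆ Z), lam i :=
      le_trans hnum0 hnd
    rcases eq_or_lt_of_le hden0 with hden | hden
    · have hnum : (∑ i ∈ L.filter (fun i => (P i).1 ∪ (P i).2 ⊆ Z), lam i) = 0 :=
        le_antisymm (hnd.trans hden.symm.le) hnum0
      rw [hnum, ← hden]
      linarith
    · have := (div_lt_iff₀ hden).mp (hratio Z hZ)
      nlinarith
end Part2a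

section Part2b

variable {n k : ℕ} {γ : ℝ} {P : Fin k → Finset (Fin n) × Finset (Fin n)}
  {X₀ Y₀ : Finset (Fin n)}

lemma cnt_table (c : Finset (Fin n) → ℕ) (X : Finset (Fin n)) :
    ((cntD (∑ Z ∈ (Finset.univ : Finset (Finset (Fin n))), Multiset.replicate (c Z) Z) X : ℝ))
      = ∑ Z : Finset (Fin n), (c Z : ℝ) * (if X ⊆ Z then 1 else 0) := by
  unfold cntD
  have key : ∀ s : Finset (Finset (Fin n)),
      (((∑ Z ∈ s, Multiset.replicate (c Z) Z).filter (fun Z => X ⊆ Z)).card : ℝ)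
        = ∑ Z ∈ s, (c Z : ℝ) * (if X ⊆ Z then 1 else 0) := by
    intro s
    induction s using Finset.cons_induction with
    | empty => simp
    | cons a s ha ih =>
      rw [Finset.sum_cons, Multiset.filter_add, Multiset.card_add, Finset.sum_cons,
        Nat.cast_add, ih]
      congr 1
      by_cases h : X ⊆ a
      · have hf : (Multiset.replicate (c a) a).filter (fun Z => X ⊆ Z)
            = Multiset.replicate (c a) a := by
          refine Multiset.filter_eq_self.mpr (fun b hb => ?_)
          rw [Multiset.eq_of_mem_replicate hb]
          exact h
        rw [hf, Multiset.card_replicate, if_pos h, mul_one]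
      · have hf : (Multiset.replicate (c a) a).filter (fun Z => X ⊆ Z) = 0 := by
          refine Multiset.filter_eq_nil.mpr (fun b hb => ?_)
          rw [Multiset.eq_of_mem_replicate hb]
          exact h
        rw [hf, if_neg h, mul_zero]
        simp
  exact key Finset.univ

lemma table_wt_sum (γ : ℝ) (c : Finset (Fin n) → ℕ) (X Y : Finset (Fin n)) :
    (cntD (∑ Z ∈ (Finset.univ : Finset (Finset (Fin n))), Multiset.replicate (c Z) Z) (X ∪ Y) : ℝ)
      - γ * (cntD (∑ Z ∈ (Finset.univ : Finset (Finset (Fin n))), Multiset.replicate (c Z) Z) X : ℝ)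
      = ∑ Z : Finset (Fin n), (c Z : ℝ) * wt γ Z X Y := by
  rw [cnt_table, cnt_table, Finset.mul_sum, ← Finset.sum_sub_distrib]
  refine Finset.sum_congr rfl (fun Z _ => ?_)
  rw [wt_eq]
  ring

lemma entails_to_dual (hγ0 : 0 < γ) (hγ1 : γ < 1) (hk : 1 ≤ k)
    (hent : entailsFrom γ P Finset.univ X₀ Y₀) :
    ∃ μ : Fin k → ℝ, (∀ i, 0 ≤ μ i) ∧
      ∀ Z, ∑ i, μ i * wt γ Z (P i).1 (P i).2 ≤ wt γ Z X₀ Y₀ := by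
  rcases farkas_lp (fun i Z => wt γ Z (P i).1 (P i).2) (fun Z => wt γ Z X₀ Y₀)
    with h | ⟨m, hm0, hmA, hmb⟩
  · exact h
  exfalso
  -- strictify the dual certificate
  set b0 : ℝ := ∑ Z, m Z * wt γ Z X₀ Y₀ with hb0
  have hb0neg : b0 < 0 := hmb
  set δ : ℝ := (-b0) / (2 * (1 - γ)) with hδ
  have hδ0 : 0 < δ := by
    apply div_pos <;> linarith
  set m' : Finset (Fin n) → ℝ := fun Z => m Z + (if Z = Finset.univ then δ else 0) with hm'
  have hm'0 : ∀ Z, 0 ≤ m' Z := by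
    intro Z
    have := hm0 Z
    show 0 ≤ m Z + (if Z = Finset.univ then δ else 0)
    split_ifs <;> linarith
  have hshift : ∀ g : Finset (Fin n) → ℝ,
      ∑ Z, m' Z * g Z = (∑ Z, m Z * g Z) + δ * g Finset.univ := by
    intro g
    simp only [hm', add_mul, Finset.sum_add_distrib]
    congr 1
    have h1 : ∀ Z ∈ (Finset.univ : Finset (Finset (Fin n))),
        (if Z = Finset.univ then δ else 0) * g Z
          = if Z = Finset.univ then δ * g Z else 0 := by
      intro Z _
      split_ifs <;> simp
    rw [Finset.sum_congr rfl h1, Finset.sum_ite_eq' Finset.univ Finset.univ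
      (fun Z => δ * g Z)]
    simp
  have hm'A : ∀ i, 0 < ∑ Z, m' Z * wt γ Z (P i).1 (P i).2 := by
    intro i
    rw [hshift, wt_univ]
    have := hmA i
    nlinarith
  have hδγ : δ * (1 - γ) = -b0 / 2 := by
    have h1γ : (1:ℝ) - γ ≠ 0 := by linarith
    rw [hδ]
    field_simp
  have hm'b : ∑ Z, m' Z * wt γ Z X₀ Y₀ < 0 := by
    rw [hshift, wt_univ, ← hb0, hδγ]
    linarith
  -- a positive margin
  have hkne : Nonempty (Fin k) := ⟨⟨0, hk⟩⟩
  have huniv_ne : (Finset.univ : Finset (Fin k)).Nonempty := Finset.univ_nonempty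
  set M : ℝ := min ((Finset.univ : Finset (Fin k)).inf' huniv_ne
      (fun i => ∑ Z, m' Z * wt γ Z (P i).1 (P i).2))
    (-(∑ Z, m' Z * wt γ Z X₀ Y₀)) with hM
  have hM0 : 0 < M := by
    refine lt_min ?_ (by linarith)
    rw [Finset.lt_inf'_iff]
    exact fun i _ => hm'A i
  have hMleA : ∀ i, M ≤ ∑ Z, m' Z * wt γ Z (P i).1 (P i).2 := fun i =>
    (min_le_left _ _).trans (Finset.inf'_le _ (Finset.mem_univ i))
  have hMleb : ∑ Z, m' Z * wt γ Z X₀ Y₀ ≤ -M := by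
    have := min_le_right ((Finset.univ : Finset (Fin k)).inf' huniv_ne
      (fun i => ∑ Z, m' Z * wt γ Z (P i).1 (P i).2))
      (-(∑ Z, m' Z * wt γ Z X₀ Y₀))
    rw [← hM] at this
    linarith
  set Ncard : ℝ := (Fintype.card (Finset (Fin n)) : ℝ) with hNcard
  have hNc0 : 0 ≤ Ncard := Nat.cast_nonneg _
  set η : ℝ := M / (2 * (Ncard + 1)) with hη
  have hη0 : 0 < η := by
    apply div_pos hM0
    linarith
  have hηN : η * Ncard < M := by
    rw [hη, div_mul_eq_mul_div, div_lt_iff₀ (by linarith : (0:ℝ) < 2 * (Ncard + 1))]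
    nlinarith
  -- rational approximation
  have hqex : ∀ Z : Finset (Fin n), ∃ q : ℚ, m' Z < q ∧ (q : ℝ) < m' Z + η :=
    fun Z => exists_rat_btwn (lt_add_of_pos_right _ hη0)
  choose q hq1 hq2 using hqex
  have hq0R : ∀ Z, (0:ℝ) ≤ (q Z : ℝ) := fun Z => ((hm'0 Z).trans_lt (hq1 Z)).le
  have hq0 : ∀ Z, 0 ≤ q Z := fun Z => by exact_mod_cast hq0R Z
  have herr : ∀ g : Finset (Fin n) → ℝ, (∀ Z, |g Z| ≤ 1) →
      |(∑ Z, (q Z : ℝ) * g Z) - ∑ Z, m' Z * g Z| ≤ η * Ncard := by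
    intro g hg
    rw [← Finset.sum_sub_distrib]
    refine (Finset.abs_sum_le_sum_abs _ _).trans ?_
    have hbound : ∀ Z ∈ (Finset.univ : Finset (Finset (Fin n))),
        |(q Z : ℝ) * g Z - m' Z * g Z| ≤ η := by
      intro Z _
      rw [← sub_mul, abs_mul]
      have h1 : |(q Z : ℝ) - m' Z| ≤ η := by
        rw [abs_le]
        constructor
        · have := hq1 Z; linarith
        · have := hq2 Z; linarith
      calc |(q Z : ℝ) - m' Z| * |g Z| ≤ η * 1 :=
            mul_le_mul h1 (hg Z) (abs_nonneg _) hη0.le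
        _ = η := mul_one η
    calc ∑ Z, |(q Z : ℝ) * g Z - m' Z * g Z| ≤ ∑ _Z : Finset (Fin n), η :=
          Finset.sum_le_sum hbound
      _ = Ncard * η := by rw [Finset.sum_const, nsmul_eq_mul, hNcard]; rfl
      _ = η * Ncard := mul_comm _ _
  have hqA : ∀ i, 0 < ∑ Z, (q Z : ℝ) * wt γ Z (P i).1 (P i).2 := by
    intro i
    have h1 := herr _ (fun Z => wt_abs γ hγ0 hγ1 Z (P i).1 (P i).2)
    have h2 := (abs_le.mp h1).1
    have h3 := hMleA i
    linarith
  have hqb : ∑ Z, (q Z : ℝ) * wt γ Z X₀ Y₀ < 0 := by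
    have h1 := herr _ (fun Z => wt_abs γ hγ0 hγ1 Z X₀ Y₀)
    have h2 := (abs_le.mp h1).2
    linarith
  -- integerize
  set N : ℕ := ∏ Z : Finset (Fin n), (q Z).den with hN
  have hNpos : 0 < N := Finset.prod_pos (fun Z _ => (q Z).pos)
  have hNR : (0:ℝ) < (N : ℝ) := by exact_mod_cast hNpos
  have hdvd : ∀ Z, (q Z).den ∣ N := fun Z => Finset.dvd_prod_of_mem _ (Finset.mem_univ Z)
  set cm : Finset (Fin n) → ℕ := fun Z => (q Z).num.toNat * (N / (q Z).den) with hcm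
  have hcast : ∀ Z, ((cm Z : ℝ)) = (q Z : ℝ) * N := by
    intro Z
    have h1 : ((q Z).num.toNat : ℚ) = ((q Z).num : ℚ) := by
      exact_mod_cast Int.toNat_of_nonneg (Rat.num_nonneg.mpr (hq0 Z))
    have hden0 : ((q Z).den : ℚ) ≠ 0 := by
      exact_mod_cast (q Z).den_nz
    have hnum : ((q Z).num : ℚ) = q Z * (q Z).den := (Rat.mul_den_eq_num (q Z)).symm
    have h2 : ((cm Z : ℚ)) = q Z * N := by
      rw [hcm]
      push_cast [h1]
      rw [Nat.cast_div (hdvd Z) hden0]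
      field_simp
      rw [hnum]
      ring
    exact_mod_cast h2
  -- the violating dataset
  set D : Multiset (Finset (Fin n)) :=
    ∑ Z ∈ (Finset.univ : Finset (Finset (Fin n))), Multiset.replicate (cm Z) Z with hD
  have hwtsum : ∀ X Y : Finset (Fin n),
      (cntD D (X ∪ Y) : ℝ) - γ * (cntD D X : ℝ)
        = (N : ℝ) * ∑ Z, (q Z : ℝ) * wt γ Z X Y := by
    intro X Y
    rw [hD, table_wt_sum, Finset.mul_sum]
    refine Finset.sum_congr rfl (fun Z _ => ?_)
    rw [hcast]
    ring
  have hprem : ∀ i ∈ (Finset.univ : Finset (Fin k)), satPI γ D (P i).1 (P i).2 := by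
    intro i _
    rw [satPI_iff]
    have h1 := hwtsum (P i).1 (P i).2
    have h2 := hqA i
    nlinarith
  have hconc := hent D hprem
  rw [satPI_iff] at hconc
  have h1 := hwtsum X₀ Y₀
  nlinarith
end Part2b

section Part2c

variable {n k : ℕ} {γ : ℝ} {P : Fin k → Finset (Fin n) × Finset (Fin n)}
  {X₀ Y₀ : Finset (Fin n)}

lemma wt_cases (γ : ℝ) (Z X Y : Finset (Fin n)) :
    wt γ Z X Y = 1 - γ ∨ wt γ Z X Y = -γ ∨ wt γ Z X Y = 0 := by
  unfold wt; split_ifs <;> simp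

lemma sum_lb (L : Finset (Fin k)) (μ w : Fin k → ℝ) (γ : ℝ)
    (hμ : ∀ i ∈ L, 0 ≤ μ i) (hw : ∀ i ∈ L, -γ ≤ w i) {i₀ : Fin k} (hi₀ : i₀ ∈ L) :
    -γ * (∑ i ∈ L, μ i) + μ i₀ * (w i₀ + γ) ≤ ∑ i ∈ L, μ i * w i := by
  have h1 : ∀ i ∈ L.erase i₀, -γ * μ i ≤ μ i * w i := by
    intro i hi
    calc -γ * μ i = μ i * (-γ) := by ring
      _ ≤ μ i * w i := mul_le_mul_of_nonneg_left
          (hw i (Finset.mem_of_mem_erase hi)) (hμ i (Finset.mem_of_mem_erase hi))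
  have h2 : -γ * ∑ i ∈ L.erase i₀, μ i ≤ ∑ i ∈ L.erase i₀, μ i * w i := by
    rw [Finset.mul_sum]
    exact Finset.sum_le_sum h1
  have e1 : ∑ i ∈ L.erase i₀, μ i + μ i₀ = ∑ i ∈ L, μ i :=
    Finset.sum_erase_add L μ hi₀
  have e2 : (∑ i ∈ L.erase i₀, μ i * w i) + μ i₀ * w i₀ = ∑ i ∈ L, μ i * w i :=
    Finset.sum_erase_add L _ hi₀
  rw [← e1, ← e2]
  nlinarith [h2]

lemma gammaStar_le_of (L : Finset (Fin k)) (hγ0 : 0 < γ) (lam : Fin k → ℝ)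
    (h0 : ∀ i ∈ L, 0 ≤ lam i) (h1 : (∑ i ∈ L, lam i) = 1)
    (hrat : ∀ Z : Finset (Fin n), ¬ X₀ ⊆ Z →
      (∑ i ∈ L.filter (fun i => (P i).1 ∪ (P i).2 ⊆ Z), lam i) /
        (∑ i ∈ L.filter (fun i => (P i).1 ⊆ Z), lam i) ≤ γ) :
    gammaStar P L X₀ ≤ γ := by
  unfold gammaStar
  refine le_trans (csInf_le ?_ ⟨lam, h0, h1, rfl⟩) ?_
  · refine ⟨0, fun r hr => ?_⟩
    obtain ⟨lam', _, _, rfl⟩ := hr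
    exact (Finset.le_fold_max _).mpr (Or.inl le_rfl)
  · exact (Finset.fold_max_le _).mpr ⟨hγ0.le,
      fun Z hZ => hrat Z (Finset.mem_filter.mp hZ).2⟩

lemma dual_to_conditions (hγ0 : 0 < γ) (hγ1 : γ < 1) (hY : ¬ Y₀ ⊆ X₀)
    (hdual : ∃ μ : Fin k → ℝ, (∀ i, 0 ≤ μ i) ∧
      ∀ Z, ∑ i, μ i * wt γ Z (P i).1 (P i).2 ≤ wt γ Z X₀ Y₀) :
    ∃ L : Finset (Fin k), L.Nonempty ∧ homogFrom P L ∧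
      (L.biUnion (fun i => (P i).1) ⊆ X₀ ∧
        X₀ ⊆ L.biUnion (fun i => (P i).1 ∪ (P i).2)) ∧
      Y₀ ⊆ X₀ ∪ L.inf (fun i => (P i).2) ∧ gammaStar P L X₀ ≤ γ := by
  classical
  set Good : (Fin k → ℝ) → Prop := fun μ => (∀ i, 0 ≤ μ i) ∧
    ∀ Z, ∑ i, μ i * wt γ Z (P i).1 (P i).2 ≤ wt γ Z X₀ Y₀ with hGoodDef
  have hGne : ∃ μ, Good μ := hdual
  set cs : Set ℕ := {c | ∃ μ, Good μ ∧
    (Finset.univ.filter (fun i => 0 < μ i)).card = c} with hcs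
  have hcsne : cs.Nonempty := by
    obtain ⟨μ, hμ⟩ := hGne
    exact ⟨_, μ, hμ, rfl⟩
  obtain ⟨μ, hGoodμ, hμcard⟩ := Nat.sInf_mem hcsne
  have hminimal : ∀ ν, Good ν → sInf cs ≤ (Finset.univ.filter (fun i => 0 < ν i)).card :=
    fun ν hν => Nat.sInf_le ⟨ν, hν, rfl⟩
  obtain ⟨hμ0, hdualμ⟩ := hGoodμ
  set L : Finset (Fin k) := Finset.univ.filter (fun i => 0 < μ i) with hL
  have hmemL : ∀ i, i ∈ L ↔ 0 < μ i := by
    intro i; rw [hL, Finset.mem_filter]; simp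
  have hsum_supp : ∀ g : Fin k → ℝ, ∑ i ∈ L, μ i * g i = ∑ i, μ i * g i := by
    intro g
    refine Finset.sum_filter_of_ne (fun i _ hne => ?_)
    rcases eq_or_lt_of_le (hμ0 i) with h | h
    · exact absurd (by rw [← h, zero_mul]) hne
    · exact h
  have hdL : ∀ Z, ∑ i ∈ L, μ i * wt γ Z (P i).1 (P i).2 ≤ wt γ Z X₀ Y₀ :=
    fun Z => (hsum_supp _).trans_le (hdualμ Z)
  -- total mass at most one
  have hT1 : ∑ i ∈ L, μ i ≤ 1 := by
    have h := hdL Finset.univ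
    rw [wt_univ, Finset.sum_congr rfl
      (fun i _ => by rw [wt_univ]), ← Finset.sum_mul] at h
    nlinarith
  -- at X₀ all weights are -γ
  have hbX₀ : wt γ X₀ X₀ Y₀ = -γ := by
    unfold wt
    rw [if_neg (fun h => hY (subset_union_right.trans h)), if_pos subset_rfl]
  have hX₀le : ∑ i ∈ L, μ i * wt γ X₀ (P i).1 (P i).2 ≤ -γ := by
    have := hdL X₀; rwa [hbX₀] at this
  have hws : ∀ i ∈ L, wt γ X₀ (P i).1 (P i).2 = -γ := by
    by_contra hcon
    push_neg at hcon
    obtain ⟨i₀, hi₀, hne⟩ := hcon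
    have hw0 : 0 ≤ wt γ X₀ (P i₀).1 (P i₀).2 := by
      rcases wt_cases γ X₀ (P i₀).1 (P i₀).2 with h | h | h
      · rw [h]; linarith
      · exact absurd h hne
      · rw [h]
    have hlb := sum_lb L μ (fun i => wt γ X₀ (P i).1 (P i).2) γ
      (fun i hi => hμ0 i) (fun i hi => wt_ge γ hγ0 hγ1 _ _ _) hi₀
    have hμi₀ : 0 < μ i₀ := (hmemL i₀).mp hi₀
    nlinarith [hX₀le, hT1]
  have hXsub : ∀ i ∈ L, (P i).1 ⊆ X₀ := by
    intro i hi
    have h := hws i hi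
    unfold wt at h
    split_ifs at h with h1 h2
    · exact absurd h (by intro hc; nlinarith)
    · exact h2
    · exact absurd h (by intro hc; nlinarith)
  have hT : ∑ i ∈ L, μ i = 1 := by
    refine le_antisymm hT1 ?_
    have h : ∑ i ∈ L, μ i * wt γ X₀ (P i).1 (P i).2 = (∑ i ∈ L, μ i) * (-γ) := by
      rw [Finset.sum_congr rfl (fun i hi => by rw [hws i hi]), ← Finset.sum_mul]
    rw [h] at hX₀le
    nlinarith
  have hLne : L.Nonempty := by
    rw [Finset.nonempty_iff_ne_empty]
    intro hc
    rw [hc, Finset.sum_empty] at hT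
    exact one_ne_zero hT.symm
  -- X₀ is inside the union of the bodies
  have hXup : X₀ ⊆ L.biUnion (fun i => (P i).1 ∪ (P i).2) := by
    by_contra hcon
    have h := hdL (L.biUnion (fun i => (P i).1 ∪ (P i).2))
    have hwU : ∀ i ∈ L, wt γ (L.biUnion (fun i => (P i).1 ∪ (P i).2)) (P i).1 (P i).2
        = 1 - γ := by
      intro i hi
      unfold wt
      rw [if_pos (Finset.subset_biUnion_of_mem (fun i => (P i).1 ∪ (P i).2) hi)]
    rw [Finset.sum_congr rfl (fun i hi => by rw [hwU i hi]), ← Finset.sum_mul, hT,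
      one_mul] at h
    have hb0 : wt γ (L.biUnion (fun i => (P i).1 ∪ (P i).2)) X₀ Y₀ = 0 := by
      unfold wt
      rw [if_neg (fun hc => hcon (subset_union_left.trans hc)), if_neg hcon]
    rw [hb0] at h
    linarith
  -- Y₀ is inside X₀ ∪ ⋂ Yᵢ
  have hYinf : ∀ e ∈ Y₀, e ∉ X₀ → ∀ i ∈ L, e ∈ (P i).2 := by
    intro e he heX i₀ hi₀
    by_contra heY
    have heX1 : e ∉ (P i₀).1 := fun hc => heX (hXsub i₀ hi₀ hc)
    set Zc := X₀ ∪ ((P i₀).1 ∪ (P i₀).2) with hZc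
    have heZc : e ∉ Zc := by
      rw [hZc]
      simp only [Finset.mem_union]
      push_neg
      exact ⟨heX, heX1, heY⟩
    have hbZc : wt γ Zc X₀ Y₀ = -γ := by
      unfold wt
      rw [if_neg (fun hc => heZc (hc (Finset.mem_union_right X₀ he))),
        if_pos Finset.subset_union_left]
    have hw1 : wt γ Zc (P i₀).1 (P i₀).2 = 1 - γ := by
      unfold wt
      rw [if_pos Finset.subset_union_right]
    have hlb := sum_lb L μ (fun i => wt γ Zc (P i).1 (P i).2) γ
      (fun i hi => hμ0 i) (fun i hi => wt_ge γ hγ0 hγ1 _ _ _) hi₀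
    have hμi₀ : 0 < μ i₀ := (hmemL i₀).mp hi₀
    have hle := hdL Zc
    rw [hbZc] at hle
    rw [hT] at hlb
    rw [hw1] at hlb
    nlinarith
  have hYsub : Y₀ ⊆ X₀ ∪ L.inf (fun i => (P i).2) := by
    intro e he
    rw [Finset.mem_union]
    by_cases heX : e ∈ X₀
    · exact Or.inl heX
    · refine Or.inr ?_
      rw [← Finset.inf'_eq_inf hLne]
      exact (Finset.mem_inf' hLne).mpr (hYinf e he heX)
  -- homogeneity via minimality of the support
  have hhom : homogFrom P L := by
    intro Z hgood
    by_cases hall : ∀ i ∈ L, ¬ (P i).1 ⊆ Z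
    · exact Or.inl hall
    right
    push_neg at hall
    obtain ⟨i₁, hi₁, hX1⟩ := hall
    by_contra hnot
    push_neg at hnot
    obtain ⟨i₂, hi₂, hnXY2⟩ := hnot
    set W := L.filter (fun i => (P i).1 ∪ (P i).2 ⊆ Z) with hWdef
    have hi₁W : i₁ ∈ W := Finset.mem_filter.mpr
      ⟨hi₁, (hgood i₁ hi₁).resolve_left (not_not_intro hX1)⟩
    have hi₂W : i₂ ∉ W := fun hc => hnXY2 (Finset.mem_filter.mp hc).2
    have hnXoff : ∀ i ∈ L, i ∉ W → ¬ (P i).1 ⊆ Z := by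
      intro i hi hiW hX
      exact hiW (Finset.mem_filter.mpr ⟨hi, (hgood i hi).resolve_left (not_not_intro hX)⟩)
    set w0 := ∑ i ∈ W, μ i with hw0def
    have hwpos : 0 < w0 := by
      refine Finset.sum_pos' (fun i hi => hμ0 i) ⟨i₁, hi₁W, ?_⟩
      exact (hmemL i₁).mp (Finset.mem_filter.mp hi₁W).1
    have hw0le1 : w0 ≤ 1 := by
      rw [← hT]
      exact Finset.sum_le_sum_of_subset_of_nonneg (Finset.filter_subset _ _)
        (fun i hi _ => hμ0 i)
    have hsplit : ∑ i ∈ L, μ i * wt γ Z (P i).1 (P i).2 = (1 - γ) * w0 := by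
      rw [← Finset.sum_filter_add_sum_filter_not L (fun i => (P i).1 ∪ (P i).2 ⊆ Z)
        (fun i => μ i * wt γ Z (P i).1 (P i).2)]
      have h2 : ∑ i ∈ L.filter (fun i => ¬ ((P i).1 ∪ (P i).2 ⊆ Z)),
          μ i * wt γ Z (P i).1 (P i).2 = 0 := by
        refine Finset.sum_eq_zero (fun i hi => ?_)
        obtain ⟨hiL, hin⟩ := Finset.mem_filter.mp hi
        have hnX : ¬ (P i).1 ⊆ Z := hnXoff i hiL (fun hc => hin (Finset.mem_filter.mp hc).2)
        have : wt γ Z (P i).1 (P i).2 = 0 := by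
          unfold wt; rw [if_neg hin, if_neg hnX]
        rw [this, mul_zero]
      have h1 : ∑ i ∈ W, μ i * wt γ Z (P i).1 (P i).2 = (1 - γ) * w0 := by
        rw [hw0def, Finset.mul_sum]
        refine Finset.sum_congr rfl (fun i hi => ?_)
        have : wt γ Z (P i).1 (P i).2 = 1 - γ := by
          unfold wt; rw [if_pos (Finset.mem_filter.mp hi).2]
        rw [this]; ring
      rw [h2, add_zero, ← hWdef, h1]
    have hZY : X₀ ∪ Y₀ ⊆ Z := by
      by_contra hcon
      have h := hdL Z
      rw [hsplit] at h
      have hble : wt γ Z X₀ Y₀ ≤ 0 := by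
        unfold wt; rw [if_neg hcon]; split_ifs <;> linarith
      nlinarith
    -- the renormalized measure supported on W
    set μ' : Fin k → ℝ := fun i => if i ∈ W then μ i / w0 else 0 with hμ'def
    have hμ'0 : ∀ i, 0 ≤ μ' i := by
      intro i
      rw [hμ'def]
      dsimp only
      split_ifs
      · exact div_nonneg (hμ0 i) hwpos.le
      · exact le_rfl
    have hwt_inter : ∀ (X Y Z' : Finset (Fin n)), X ∪ Y ⊆ Z →
        wt γ (Z' ∩ Z) X Y = wt γ Z' X Y := by
      intro X Y Z' hXY
      have hXZ : X ⊆ Z := subset_union_left.trans hXY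
      have e1 : (X ∪ Y ⊆ Z' ∩ Z) ↔ (X ∪ Y ⊆ Z') := by
        rw [Finset.subset_inter_iff]
        exact ⟨fun h => h.1, fun h => ⟨h, hXY⟩⟩
      have e2 : (X ⊆ Z' ∩ Z) ↔ (X ⊆ Z') := by
        rw [Finset.subset_inter_iff]
        exact ⟨fun h => h.1, fun h => ⟨h, hXZ⟩⟩
      unfold wt
      simp only [e1, e2]
    have hdualμ' : ∀ Z', ∑ i, μ' i * wt γ Z' (P i).1 (P i).2 ≤ wt γ Z' X₀ Y₀ := by
      intro Z'
      have hres : ∑ i, μ' i * wt γ Z' (P i).1 (P i).2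
          = (∑ i ∈ W, μ i * wt γ Z' (P i).1 (P i).2) / w0 := by
        rw [Finset.sum_div]
        rw [← Finset.sum_subset (Finset.subset_univ W) (fun i _ hiW => by
          rw [hμ'def]; dsimp only; rw [if_neg hiW, zero_mul])]
        refine Finset.sum_congr rfl (fun i hi => ?_)
        rw [hμ'def]; dsimp only; rw [if_pos hi, div_mul_eq_mul_div]
      rw [hres]
      have hnum_eq : ∑ i ∈ W, μ i * wt γ Z' (P i).1 (P i).2
          = ∑ i ∈ L, μ i * wt γ (Z' ∩ Z) (P i).1 (P i).2 := by
        rw [← Finset.sum_filter_add_sum_filter_not L (fun i => (P i).1 ∪ (P i).2 ⊆ Z)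
          (fun i => μ i * wt γ (Z' ∩ Z) (P i).1 (P i).2)]
        have h2 : ∑ i ∈ L.filter (fun i => ¬ ((P i).1 ∪ (P i).2 ⊆ Z)),
            μ i * wt γ (Z' ∩ Z) (P i).1 (P i).2 = 0 := by
          refine Finset.sum_eq_zero (fun i hi => ?_)
          obtain ⟨hiL, hin⟩ := Finset.mem_filter.mp hi
          have hnX : ¬ (P i).1 ⊆ Z := hnXoff i hiL
            (fun hc => hin (Finset.mem_filter.mp hc).2)
          have hnX' : ¬ (P i).1 ⊆ Z' ∩ Z :=
            fun hc => hnX (hc.trans Finset.inter_subset_right)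
          have hnXY' : ¬ ((P i).1 ∪ (P i).2 ⊆ Z' ∩ Z) :=
            fun hc => hnX' (subset_union_left.trans hc)
          have : wt γ (Z' ∩ Z) (P i).1 (P i).2 = 0 := by
            unfold wt; rw [if_neg hnXY', if_neg hnX']
          rw [this, mul_zero]
        rw [h2, add_zero, ← hWdef]
        refine Finset.sum_congr rfl (fun i hi => ?_)
        rw [hwt_inter _ _ _ (Finset.mem_filter.mp hi).2]
      have hbeq : wt γ (Z' ∩ Z) X₀ Y₀ = wt γ Z' X₀ Y₀ := hwt_inter X₀ Y₀ Z' hZY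
      have hle := hdL (Z' ∩ Z)
      rw [hbeq] at hle
      have hnum_le : ∑ i ∈ W, μ i * wt γ Z' (P i).1 (P i).2 ≤ wt γ Z' X₀ Y₀ := by
        rw [hnum_eq]; exact hle
      by_cases hbpos : X₀ ∪ Y₀ ⊆ Z'
      · have hb : wt γ Z' X₀ Y₀ = 1 - γ := by unfold wt; rw [if_pos hbpos]
        rw [hb, div_le_iff₀ hwpos]
        calc ∑ i ∈ W, μ i * wt γ Z' (P i).1 (P i).2
            ≤ ∑ i ∈ W, μ i * (1 - γ) :=
              Finset.sum_le_sum (fun i hi =>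
                mul_le_mul_of_nonneg_left (wt_le γ hγ0 hγ1 _ _ _) (hμ0 i))
          _ = (1 - γ) * w0 := by rw [← Finset.sum_mul, ← hw0def]; ring
      · have hble0 : wt γ Z' X₀ Y₀ ≤ 0 := by
          unfold wt; rw [if_neg hbpos]; split_ifs <;> linarith
        rw [div_le_iff₀ hwpos]
        nlinarith [hnum_le, hble0, hw0le1, hwpos,
          mul_nonneg (neg_nonneg.mpr hble0) (sub_nonneg.mpr hw0le1)]
    -- contradiction with minimal support
    have hsupp' : Finset.univ.filter (fun i => 0 < μ' i) = W := by
      ext i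
      simp only [Finset.mem_filter, Finset.mem_univ, true_and]
      constructor
      · intro h
        by_contra hiW
        rw [hμ'def] at h; dsimp only at h; rw [if_neg hiW] at h
        exact lt_irrefl 0 h
      · intro hiW
        rw [hμ'def]; dsimp only; rw [if_pos hiW]
        exact div_pos ((hmemL i).mp (Finset.mem_filter.mp hiW).1) hwpos
    have hGood' : Good μ' := ⟨hμ'0, hdualμ'⟩
    have hcardlt : W.card < L.card :=
      Finset.card_lt_card ⟨Finset.filter_subset _ _, fun hsub => hi₂W (hsub hi₂)⟩
    have := hminimal μ' hGood'
    rw [hsupp'] at this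
    omega
  -- the critical threshold bound
  have hgs : gammaStar P L X₀ ≤ γ := by
    refine gammaStar_le_of L hγ0 μ (fun i _ => hμ0 i) hT (fun Z hZ => ?_)
    have h := hdL Z
    rw [sum_wt_split] at h
    have hb0 : wt γ Z X₀ Y₀ = 0 := by
      unfold wt
      rw [if_neg (fun hc => hZ (subset_union_left.trans hc)), if_neg hZ]
    rw [hb0] at h
    have hnum0 : 0 ≤ ∑ i ∈ L.filter (fun i => (P i).1 ∪ (P i).2 ⊆ Z), μ i :=
      Finset.sum_nonneg (fun i _ => hμ0 i)
    have hnd : (∑ i ∈ L.filter (fun i => (P i).1 ∪ (P i).2 ⊆ Z), μ i)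
        ≤ ∑ i ∈ L.filter (fun i => (P i).1 ⊆ Z), μ i :=
      Finset.sum_le_sum_of_subset_of_nonneg
        (Finset.monotone_filter_right L (fun i _ h => subset_union_left.trans h))
        (fun i _ _ => hμ0 i)
    have hden0 : 0 ≤ ∑ i ∈ L.filter (fun i => (P i).1 ⊆ Z), μ i := le_trans hnum0 hnd
    rcases eq_or_lt_of_le hden0 with hden | hden
    · have hnum : (∑ i ∈ L.filter (fun i => (P i).1 ∪ (P i).2 ⊆ Z), μ i) = 0 :=
        le_antisymm (hnd.trans hden.symm.le) hnum0
      rw [hnum, ← hden, div_zero]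
      exact hγ0.le
    · rw [div_le_iff₀ hden]
      linarith
  exact ⟨L, hLne, hhom, ⟨Finset.biUnion_subset.mpr hXsub, hXup⟩, hYsub, hgs⟩

end Part2c

theorem stmt17 {n k : ℕ} (γ : ℝ) (hγ0 : 0 < γ) (hγ1 : γ < 1) (hk : 1 ≤ k)
    (P : Fin k → Finset (Fin n) × Finset (Fin n)) (X₀ Y₀ : Finset (Fin n)) :
    (entailsFrom γ P Finset.univ X₀ Y₀ ↔
      ∃ L : Finset (Fin k), properFrom γ P L X₀ Y₀) ∧
    (entailsFrom γ P Finset.univ X₀ Y₀ ↔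
      (Y₀ ⊆ X₀ ∨ ∃ L : Finset (Fin k), L.Nonempty ∧
        homogFrom P L ∧
        (L.biUnion (fun i => (P i).1) ⊆ X₀ ∧
         X₀ ⊆ L.biUnion (fun i => (P i).1 ∪ (P i).2)) ∧
        Y₀ ⊆ X₀ ∪ L.inf (fun i => (P i).2) ∧
        gammaStar P L X₀ ≤ γ)) := by
  constructor
  · constructor
    · exact fun h => exists_proper_of_entails h
    · rintro ⟨L, hL⟩
      exact entails_mono (Finset.subset_univ L) hL.1
  · constructor
    · intro hent
      by_cases hY : Y₀ ⊆ X₀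
      · exact Or.inl hY
      · exact Or.inr (dual_to_conditions hγ0 hγ1 hY (entails_to_dual hγ0 hγ1 hk hent))
    · rintro (hY | ⟨L, hne, hhom, ⟨hb1, hb2⟩, hc, hd⟩)
      · intro D hD
        rw [satPI_iff, Finset.union_eq_left.mpr hY]
        nlinarith [Nat.cast_nonneg (α := ℝ) (cntD D X₀)]
      · exact entails_mono (Finset.subset_univ L)
          (conditions_to_entails hγ0 hγ1 hne hb1 hc hd)
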